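/- Let φ : D(r) → M be a local homeomorphism from the Euclidean ball D(r) ⊂ ℂⁿ to a metric space M, and suppose there is C > 0 such that for every path γ̃ in D(r/2), the length of φ∘γ̃ in M is at least C⁻¹ times the Euclidean length of γ̃. Let γ : [0,1] → M be a path with γ(0) = φ(z) for some z ∈ D(r/8), and suppose the length of γ is less than r/(4C). Then γ admits a unique lift γ̃ : [0,1] → D(r/2) with φ∘γ̃ = γ and γ̃(0) = z. -/

import Mathlib

open Metric unitInterval Filter

namespace Stmt9Aux

variable {n : ℕ} {M : Type*} [MetricSpace M]
  {r C : ℝ}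
  {φ : EuclideanSpace ℂ (Fin n) → M} {γ : unitInterval → M}
  {z : EuclideanSpace ℂ (Fin n)}

/-- `c` is a lift of `γ` on `[0, t]`, extended constantly after `t`. -/
def IsPLift (r : ℝ) (φ : EuclideanSpace ℂ (Fin n) → M) (γ : unitInterval → M)
    (z : EuclideanSpace ℂ (Fin n)) (t : unitInterval)
    (c : unitInterval → EuclideanSpace ℂ (Fin n)) : Prop :=
  Continuous c ∧ (∀ s, c s ∈ ball (0 : EuclideanSpace ℂ (Fin n)) (r / 2)) ∧
    (∀ s, s ≤ t → φ (c s) = γ s) ∧ (∀ s, t ≤ s → c s = c t) ∧ c 0 = z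

theorem IsPLift.comp_eq {t : unitInterval} {c : unitInterval → EuclideanSpace ℂ (Fin n)}
    (hc : IsPLift r φ γ z t c) : φ ∘ c = γ ∘ (fun s => min s t) := by
  funext s
  rcases le_total s t with h | h
  · simp only [Function.comp_apply, min_eq_left h]
    exact hc.2.2.1 s h
  · simp only [Function.comp_apply, min_eq_right h]
    rw [hc.2.2.2.1 s h]
    exact hc.2.2.1 t le_rfl

theorem ofReal_mul_ofReal_inv (hC : 0 < C) :
    ENNReal.ofReal C * ENNReal.ofReal C⁻¹ = 1 := by
  rw [← ENNReal.ofReal_mul hC.le, mul_inv_cancel₀ hC.ne', ENNReal.ofReal_one]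

theorem le_ofReal_mul_of_inv_mul_le {x y : ENNReal} (hC : 0 < C)
    (h : ENNReal.ofReal C⁻¹ * x ≤ y) : x ≤ ENNReal.ofReal C * y :=
  calc x = ENNReal.ofReal C * (ENNReal.ofReal C⁻¹ * x) := by
        rw [← mul_assoc, ofReal_mul_ofReal_inv hC, one_mul]
    _ ≤ ENNReal.ofReal C * y := mul_le_mul_right h _

/-- Variation of a partial lift on a subinterval is controlled by that of `γ`. -/
theorem IsPLift.evar_Icc_le (hC : 0 < C)
    (hlen : ∀ c : unitInterval → EuclideanSpace ℂ (Fin n), Continuous c →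
      (∀ s, c s ∈ ball (0 : EuclideanSpace ℂ (Fin n)) (r / 2)) →
      ENNReal.ofReal C⁻¹ * eVariationOn c Set.univ ≤ eVariationOn (φ ∘ c) Set.univ)
    {t : unitInterval} {c : unitInterval → EuclideanSpace ℂ (Fin n)}
    (hc : IsPLift r φ γ z t c) {a b : unitInterval} (hab : a ≤ b) (hbt : b ≤ t) :
    eVariationOn c (Set.Icc a b) ≤ ENNReal.ofReal C * eVariationOn γ (Set.Icc a b) := by
  set clamp : unitInterval → unitInterval := fun u => max a (min u b) with hclamp
  have hmono : Monotone clamp := monotone_const.max (monotone_id.min monotone_const)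
  have hcont : Continuous clamp := continuous_const.max (continuous_id.min continuous_const)
  have himg : clamp '' Set.univ = Set.Icc a b := by
    apply subset_antisymm
    · rintro x ⟨u, -, rfl⟩
      exact ⟨le_max_left _ _, max_le (hab) (min_le_right _ _)⟩
    · rintro v ⟨hav, hvb⟩
      exact ⟨v, Set.mem_univ _, by simp [hclamp, min_eq_left hvb, max_eq_right hav]⟩
  have hcl_le : ∀ u, clamp u ≤ t := fun u =>
    (max_le (hab.trans hbt) ((min_le_right _ _).trans hbt))
  have h1 : ENNReal.ofReal C⁻¹ * eVariationOn (c ∘ clamp) Set.univ ≤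
      eVariationOn (φ ∘ (c ∘ clamp)) Set.univ :=
    hlen (c ∘ clamp) (hc.1.comp hcont) (fun s => hc.2.1 _)
  have h2 : eVariationOn (c ∘ clamp) Set.univ = eVariationOn c (Set.Icc a b) := by
    rw [eVariationOn.comp_eq_of_monotoneOn c clamp (hmono.monotoneOn _), himg]
  have h3 : φ ∘ (c ∘ clamp) = γ ∘ clamp := by
    funext u
    exact hc.2.2.1 (clamp u) (hcl_le u)
  have h4 : eVariationOn (γ ∘ clamp) Set.univ = eVariationOn γ (Set.Icc a b) := by
    rw [eVariationOn.comp_eq_of_monotoneOn γ clamp (hmono.monotoneOn _), himg]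
  rw [h2, h3, h4] at h1
  exact le_ofReal_mul_of_inv_mul_le hC h1

/-- Global bound: any partial lift stays within `r/4` of `z`. -/
theorem IsPLift.dist_le (hr : 0 < r) (hC : 0 < C)
    (hlen : ∀ c : unitInterval → EuclideanSpace ℂ (Fin n), Continuous c →
      (∀ s, c s ∈ ball (0 : EuclideanSpace ℂ (Fin n)) (r / 2)) →
      ENNReal.ofReal C⁻¹ * eVariationOn c Set.univ ≤ eVariationOn (φ ∘ c) Set.univ)
    (hshort : eVariationOn γ Set.univ < ENNReal.ofReal (r / (4 * C)))
    {t : unitInterval} {c : unitInterval → EuclideanSpace ℂ (Fin n)}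
    (hc : IsPLift r φ γ z t c) : ∀ s, dist (c s) z ≤ r / 4 := by
  have h1 : ENNReal.ofReal C⁻¹ * eVariationOn c Set.univ ≤ eVariationOn (φ ∘ c) Set.univ :=
    hlen c hc.1 hc.2.1
  have h2 : eVariationOn (φ ∘ c) Set.univ ≤ eVariationOn γ Set.univ := by
    rw [hc.comp_eq]
    exact eVariationOn.comp_le_of_monotoneOn γ _
      ((monotone_id.min monotone_const).monotoneOn _) (Set.mapsTo_univ _ _)
  have h3 : eVariationOn c Set.univ ≤ ENNReal.ofReal C * eVariationOn γ Set.univ :=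
    le_ofReal_mul_of_inv_mul_le hC (h1.trans h2)
  have h4 : eVariationOn c Set.univ ≤ ENNReal.ofReal (r / 4) := by
    refine h3.trans ?_
    calc ENNReal.ofReal C * eVariationOn γ Set.univ
        ≤ ENNReal.ofReal C * ENNReal.ofReal (r / (4 * C)) := mul_le_mul_right hshort.le _
      _ = ENNReal.ofReal (r / 4) := by
          rw [← ENNReal.ofReal_mul hC.le]
          congr 1
          field_simp
  intro s
  have h5 : edist (c s) z ≤ ENNReal.ofReal (r / 4) := by
    rw [← hc.2.2.2.2]
    exact (eVariationOn.edist_le c (Set.mem_univ s) (Set.mem_univ 0)).trans h4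
  rw [edist_dist] at h5
  exact (ENNReal.ofReal_le_ofReal_iff (by linarith)).mp h5

/-- Uniqueness of partial lifts. -/
theorem IsPLift.unique (hr : 0 < r)
    (hloc : IsLocalHomeomorphOn φ (ball 0 r))
    {t : unitInterval} {c c' : unitInterval → EuclideanSpace ℂ (Fin n)}
    (hc : IsPLift r φ γ z t c) (hc' : IsPLift r φ γ z t c') : c = c' := by
  have hφcc' : ∀ s, φ (c s) = φ (c' s) := by
    intro s
    have := congrFun hc.comp_eq s
    have h2 := congrFun hc'.comp_eq s
    simp only [Function.comp_apply] at this h2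
    rw [this, h2]
  have hsub : ball (0 : EuclideanSpace ℂ (Fin n)) (r / 2) ⊆ ball 0 r :=
    ball_subset_ball (by linarith)
  set S := {s : unitInterval | c s = c' s} with hS
  have hclosed : IsClosed S := isClosed_eq hc.1 hc'.1
  have hopen : IsOpen S := by
    rw [isOpen_iff_mem_nhds]
    intro s hs
    obtain ⟨e, hpe, hfe⟩ := hloc (c s) (hsub (hc.2.1 s))
    have hN : c ⁻¹' e.source ∩ c' ⁻¹' e.source ∈ nhds s := by
      apply Filter.inter_mem
      · exact hc.1.continuousAt.preimage_mem_nhds (e.open_source.mem_nhds hpe)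
      · exact hc'.1.continuousAt.preimage_mem_nhds (e.open_source.mem_nhds (hs ▸ hpe))
    refine Filter.mem_of_superset hN ?_
    rintro u ⟨hu1, hu2⟩
    have : e (c u) = e (c' u) := by
      rw [← hfe]; exact hφcc' u
    exact e.injOn hu1 hu2 this
  have : S = Set.univ := IsClopen.eq_univ ⟨hclosed, hopen⟩ ⟨0, by simp [hS, hc.2.2.2.2, hc'.2.2.2.2]⟩
  funext s
  exact (Set.eq_univ_iff_forall.mp this) s

/-- Restriction of a partial lift to an earlier time. -/
theorem IsPLift.restrict {t t' : unitInterval} {c : unitInterval → EuclideanSpace ℂ (Fin n)}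
    (hc : IsPLift r φ γ z t c) (h : t' ≤ t) :
    IsPLift r φ γ z t' (fun s => c (min s t')) := by
  refine ⟨hc.1.comp (continuous_id.min continuous_const), fun s => hc.2.1 _, ?_, ?_, ?_⟩
  · intro s hs
    show φ (c (min s t')) = γ s
    rw [min_eq_left hs]
    exact hc.2.2.1 s (hs.trans h)
  · intro s hs
    show c (min s t') = c (min t' t')
    rw [min_eq_right hs, min_eq_left le_rfl]
  · show c (min 0 t') = z
    rw [min_eq_left unitInterval.nonneg']
    exact hc.2.2.2.2

/-- A partial lift with `t < 1` can be extended strictly beyond `t`. -/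
theorem IsPLift.extend (hr : 0 < r)
    (hloc : IsLocalHomeomorphOn φ (ball 0 r)) (hγ : Continuous γ)
    {t : unitInterval} {c : unitInterval → EuclideanSpace ℂ (Fin n)}
    (hc : IsPLift r φ γ z t c) (hlt : (t : ℝ) < 1) :
    ∃ t' : unitInterval, (t : ℝ) < (t' : ℝ) ∧ ∃ c', IsPLift r φ γ z t' c' := by
  classical
  have hsub : ball (0 : EuclideanSpace ℂ (Fin n)) (r / 2) ⊆ ball 0 r :=
    ball_subset_ball (by linarith)
  set p := c t with hp
  obtain ⟨e, hpe, hfe⟩ := hloc p (hsub (hc.2.1 t))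
  have hγt : γ t = e p := by rw [← hc.2.2.1 t le_rfl, hfe]
  have hγtt : γ t ∈ e.target := hγt ▸ e.map_source hpe
  set g : unitInterval → EuclideanSpace ℂ (Fin n) := fun s => e.symm (γ s) with hg
  have hgco : ContinuousOn g (γ ⁻¹' e.target) :=
    e.continuousOn_symm.comp hγ.continuousOn (Set.mapsTo_preimage γ e.target)
  have hgt : g t = p := by rw [hg]; simp only; rw [hγt, e.left_inv hpe]
  set Ω := γ ⁻¹' e.target ∩ g ⁻¹' (e.source ∩ ball 0 (r / 2)) with hΩdef
  have h1 : γ ⁻¹' e.target ∈ nhds t :=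
    hγ.continuousAt.preimage_mem_nhds (e.open_target.mem_nhds hγtt)
  have hgat : ContinuousAt g t := hgco.continuousAt h1
  have h2 : g ⁻¹' (e.source ∩ ball 0 (r / 2)) ∈ nhds t :=
    hgat.preimage_mem_nhds ((e.open_source.inter isOpen_ball).mem_nhds
      (by rw [hgt]; exact ⟨hpe, hc.2.1 t⟩))
  obtain ⟨δ, hδ, hball⟩ := Metric.mem_nhds_iff.mp (Filter.inter_mem h1 h2)
  set T' : ℝ := min 1 ((t : ℝ) + δ / 2) with hT'
  have hT'mem : T' ∈ Set.Icc (0 : ℝ) 1 :=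
    ⟨le_min zero_le_one (by have := t.2.1; linarith), min_le_left _ _⟩
  set t' : unitInterval := ⟨T', hT'mem⟩ with ht'def
  have htt' : t < t' := by
    rw [← Subtype.coe_lt_coe]
    exact lt_min hlt (by linarith)
  have hmemΩ : ∀ s : unitInterval, t ≤ s → s ≤ t' → s ∈ Ω := by
    intro s hts hst'
    apply hball
    rw [mem_ball, Subtype.dist_eq, Real.dist_eq, abs_of_nonneg (by
      rw [← Subtype.coe_le_coe] at hts; linarith [hts])]
    rw [← Subtype.coe_le_coe] at hst'
    have : (t' : ℝ) ≤ (t : ℝ) + δ / 2 := min_le_right _ _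
    simp only [ht'def] at hst'
    linarith
  refine ⟨t', htt', ⟨fun s => if s ≤ t then c s else g (min s t'), ?_, ?_, ?_, ?_, ?_⟩⟩
  · -- continuity
    apply continuous_if_le continuous_id continuous_const hc.1.continuousOn
    · -- ContinuousOn (fun s => g (min s t')) {s | t ≤ s}
      apply ContinuousOn.comp hgco (continuous_id.min continuous_const).continuousOn
      intro s hs
      exact (hmemΩ (min s t') (le_min hs htt'.le) (min_le_right _ _)).1
    · intro s hst
      have hst : s = t := hst
      rw [hst, min_eq_left htt'.le, hgt]
  · -- stays in the ball
    intro s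
    by_cases hst : s ≤ t
    · simpa [hst] using hc.2.1 s
    · have hts : t ≤ s := (not_le.mp hst).le
      simp only [if_neg hst]
      exact (hmemΩ (min s t') (le_min hts htt'.le) (min_le_right _ _)).2.2
  · -- lifts γ up to t'
    intro s hst'
    by_cases hst : s ≤ t
    · simpa [hst] using hc.2.2.1 s hst
    · have hts : t ≤ s := (not_le.mp hst).le
      simp only [if_neg hst]
      rw [min_eq_left hst']
      have hsΩ : s ∈ Ω := hmemΩ s hts hst'
      rw [hfe]
      exact e.right_inv hsΩ.1
  · -- constant after t'
    intro s hst'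
    have hst : ¬ s ≤ t := not_le.mpr (htt'.trans_le hst')
    have hst2 : ¬ t' ≤ t := not_le.mpr htt'
    simp only [if_neg hst, if_neg hst2, min_eq_right hst', min_eq_left le_rfl]
  · -- starts at z
    simp only [if_pos (unitInterval.nonneg' : (0 : unitInterval) ≤ t)]
    exact hc.2.2.2.2

/-- Cumulative variation of `γ`, as a monotone real function on `ℝ`. -/
noncomputable def Vr (γ : unitInterval → M) (x : ℝ) : ℝ :=
  (eVariationOn γ {s : unitInterval | (s : ℝ) ≤ x}).toReal

theorem evar_ne_top (hfin : eVariationOn γ Set.univ ≠ ⊤) (S : Set unitInterval) :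
    eVariationOn γ S ≠ ⊤ :=
  ((eVariationOn.mono γ (Set.subset_univ S)).trans_lt (lt_top_iff_ne_top.mpr hfin)).ne

theorem Vr_mono (hfin : eVariationOn γ Set.univ ≠ ⊤) : Monotone (Vr γ) := by
  intro x y hxy
  exact ENNReal.toReal_mono (evar_ne_top hfin _)
    (eVariationOn.mono γ (fun s hs => le_trans hs hxy))

theorem Vr_diff (hfin : eVariationOn γ Set.univ ≠ ⊤) {a b : unitInterval} (hab : a ≤ b) :
    (eVariationOn γ (Set.Icc a b)).toReal = Vr γ b - Vr γ a := by
  have hIic : ∀ u : unitInterval, {s : unitInterval | (s : ℝ) ≤ (u : ℝ)} = Set.Icc 0 u := by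
    intro u; ext s; simp [unitInterval.nonneg', Subtype.coe_le_coe]
  have hadd := eVariationOn.Icc_add_Icc γ (s := (Set.univ : Set unitInterval))
    (a := 0) (b := a) (c := b) (by exact a.2.1) hab (Set.mem_univ a)
  simp only [Set.univ_inter] at hadd
  rw [Vr, Vr, hIic a, hIic b, ← hadd, ENNReal.toReal_add (evar_ne_top hfin _) (evar_ne_top hfin _)]
  ring

/-- Key distance estimate between two compatible partial lifts. -/
theorem dist_lift_le (hr : 0 < r) (hC : 0 < C)
    (hloc : IsLocalHomeomorphOn φ (ball 0 r))
    (hlen : ∀ c : unitInterval → EuclideanSpace ℂ (Fin n), Continuous c →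
      (∀ s, c s ∈ ball (0 : EuclideanSpace ℂ (Fin n)) (r / 2)) →
      ENNReal.ofReal C⁻¹ * eVariationOn c Set.univ ≤ eVariationOn (φ ∘ c) Set.univ)
    (hfin : eVariationOn γ Set.univ ≠ ⊤)
    {u u' : unitInterval} {f f' : unitInterval → EuclideanSpace ℂ (Fin n)}
    (hf : IsPLift r φ γ z u f) (hf' : IsPLift r φ γ z u' f') (huu' : u ≤ u') :
    ∀ s, dist (f s) (f' s) ≤ C * (Vr γ u' - Vr γ u) := by
  have hcompat : ∀ s, f' (min s u) = f s := by
    have := IsPLift.unique hr hloc (hf'.restrict huu') hf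
    intro s; exact congrFun this s
  intro s
  by_cases hs : s ≤ u
  · rw [← hcompat s, min_eq_left hs, dist_self]
    have : Vr γ u ≤ Vr γ u' := Vr_mono hfin (Subtype.coe_le_coe.mpr huu')
    exact mul_nonneg hC.le (by linarith)
  · have hus : u ≤ s := (not_le.mp hs).le
    have h1 : f s = f' u := by rw [← hcompat s, min_eq_right hus]
    have h2 : f' s = f' (min s u') := by
      rcases le_total s u' with h | h
      · rw [min_eq_left h]
      · rw [min_eq_right h, hf'.2.2.2.1 s h]
    have hmem1 : u ∈ Set.Icc u u' := ⟨le_rfl, huu'⟩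
    have hmem2 : min s u' ∈ Set.Icc u u' := ⟨le_min hus huu', min_le_right _ _⟩
    have hedist : edist (f' u) (f' (min s u')) ≤ eVariationOn f' (Set.Icc u u') :=
      eVariationOn.edist_le f' hmem1 hmem2
    have hvar : eVariationOn f' (Set.Icc u u') ≤ ENNReal.ofReal C * eVariationOn γ (Set.Icc u u') :=
      IsPLift.evar_Icc_le hC hlen hf' huu' le_rfl
    have hne : ENNReal.ofReal C * eVariationOn γ (Set.Icc u u') ≠ ⊤ :=
      ENNReal.mul_ne_top ENNReal.ofReal_ne_top (evar_ne_top hfin _)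
    rw [h1, h2]
    have := ENNReal.toReal_mono hne (hedist.trans hvar)
    calc dist (f' u) (f' (min s u')) = (edist (f' u) (f' (min s u'))).toReal := by
          rw [edist_dist, ENNReal.toReal_ofReal dist_nonneg]
      _ ≤ (ENNReal.ofReal C * eVariationOn γ (Set.Icc u u')).toReal := this
      _ = C * (Vr γ u' - Vr γ u) := by
          rw [ENNReal.toReal_mul, ENNReal.toReal_ofReal hC.le, Vr_diff hfin huu']

/-- Taking limits of a sequence of partial lifts. -/
theorem limit_lift (hr : 0 < r) (hC : 0 < C)
    (hloc : IsLocalHomeomorphOn φ (ball 0 r))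
    (hlen : ∀ c : unitInterval → EuclideanSpace ℂ (Fin n), Continuous c →
      (∀ s, c s ∈ ball (0 : EuclideanSpace ℂ (Fin n)) (r / 2)) →
      ENNReal.ofReal C⁻¹ * eVariationOn c Set.univ ≤ eVariationOn (φ ∘ c) Set.univ)
    (hγ : Continuous γ)
    (hz : z ∈ ball (0 : EuclideanSpace ℂ (Fin n)) (r / 8))
    (hshort : eVariationOn γ Set.univ < ENNReal.ofReal (r / (4 * C)))
    {T : ℝ} (hT : T ∈ Set.Icc (0 : ℝ) 1)
    (u : ℕ → unitInterval) (hu1 : ∀ k, (u k : ℝ) < T)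
    (hu2 : Tendsto (fun k => (u k : ℝ)) atTop (nhds T))
    (f : ℕ → unitInterval → EuclideanSpace ℂ (Fin n))
    (hf : ∀ k, IsPLift r φ γ z (u k) (f k)) :
    ∃ c, IsPLift r φ γ z ⟨T, hT⟩ c := by
  set tI : unitInterval := ⟨T, hT⟩ with htI
  have hfin : eVariationOn γ Set.univ ≠ ⊤ := (hshort.trans ENNReal.ofReal_lt_top).ne
  have hsub : ball (0 : EuclideanSpace ℂ (Fin n)) (r / 2) ⊆ ball 0 r :=
    ball_subset_ball (by linarith)
  set v : ℕ → ℝ := fun k => Vr γ (u k) with hv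
  have key : ∀ k m s, dist (f k s) (f m s) ≤ C * dist (v m) (v k) := by
    intro k m s
    rcases le_total (u k) (u m) with h | h
    · refine (dist_lift_le hr hC hloc hlen hfin (hf k) (hf m) h s).trans ?_
      rw [Real.dist_eq]
      exact mul_le_mul_of_nonneg_left (le_abs_self _) hC.le
    · rw [dist_comm]
      refine (dist_lift_le hr hC hloc hlen hfin (hf m) (hf k) h s).trans ?_
      rw [Real.dist_eq, abs_sub_comm]
      exact mul_le_mul_of_nonneg_left (le_abs_self _) hC.le
  set F : ℕ → C(unitInterval, EuclideanSpace ℂ (Fin n)) := fun k => ⟨f k, (hf k).1⟩ with hF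
  have hvconv : Tendsto v atTop (nhds (sSup (Vr γ '' Set.Iio T))) := by
    have h1 := (Vr_mono hfin).tendsto_nhdsLT T
    exact h1.comp (tendsto_nhdsWithin_of_tendsto_nhds_of_eventually_within _ hu2
      (Eventually.of_forall hu1))
  have hvC : CauchySeq v := hvconv.cauchySeq
  have hFC : CauchySeq F := by
    rw [Metric.cauchySeq_iff]
    intro ε hε
    obtain ⟨N, hN⟩ := Metric.cauchySeq_iff.mp hvC (ε / (C + 1)) (by positivity)
    refine ⟨N, fun m hm k hk => ?_⟩
    have hd : dist (F m) (F k) ≤ C * dist (v k) (v m) := by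
      rw [ContinuousMap.dist_le (by positivity)]
      intro x
      exact key m k x
    have h2 := hN k hk m hm
    have h3 : C * dist (v k) (v m) < ε := by
      have hd0 : 0 ≤ dist (v k) (v m) := dist_nonneg
      have h2' : dist (v k) (v m) * (C + 1) < ε := (lt_div_iff₀ (by positivity)).mp h2
      nlinarith
    exact hd.trans_lt h3
  obtain ⟨Fl, hFl⟩ := cauchySeq_tendsto_of_complete hFC
  have hpt : ∀ s, Tendsto (fun k => f k s) atTop (nhds (Fl s)) := fun s =>
    ((continuous_eval_const s).tendsto Fl).comp hFl
  have hballz : ∀ s, dist (Fl s) z ≤ r / 4 := by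
    intro s
    refine le_of_tendsto ((hpt s).dist (tendsto_const_nhds (x := z))) ?_
    exact Eventually.of_forall fun k => IsPLift.dist_le hr hC hlen hshort (hf k) s
  have hball : ∀ s, Fl s ∈ ball (0 : EuclideanSpace ℂ (Fin n)) (r / 2) := by
    intro s
    rw [mem_ball]
    have h1 := hballz s
    have h2 : dist z 0 < r / 8 := mem_ball.mp hz
    calc dist (Fl s) 0 ≤ dist (Fl s) z + dist z 0 := dist_triangle _ _ _
      _ < r / 4 + r / 8 := by linarith
      _ ≤ r / 2 := by linarith
  have hφat : ∀ s, ContinuousAt φ (Fl s) := fun s => hloc.continuousAt (hsub (hball s))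
  have hlift_lt : ∀ s : unitInterval, (s : ℝ) < T → φ (Fl s) = γ s := by
    intro s hsT
    have hev : ∀ᶠ k in atTop, s ≤ u k := by
      filter_upwards [hu2.eventually (eventually_gt_nhds hsT)] with k hk
      exact Subtype.coe_le_coe.mp hk.le
    have h1 : Tendsto (fun k => φ (f k s)) atTop (nhds (φ (Fl s))) :=
      (hφat s).tendsto.comp (hpt s)
    have h2 : Tendsto (fun k => φ (f k s)) atTop (nhds (γ s)) := by
      refine Tendsto.congr' ?_ (tendsto_const_nhds (x := γ s))
      filter_upwards [hev] with k hk
      exact ((hf k).2.2.1 s hk).symm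
    exact tendsto_nhds_unique h1 h2
  have huI : Tendsto u atTop (nhds tI) := by
    rw [tendsto_subtype_rng]
    exact hu2
  refine ⟨Fl, Fl.continuous, hball, ?_, ?_, ?_⟩
  · intro s hs
    rcases lt_or_eq_of_le (Subtype.coe_le_coe.mpr hs) with h | h
    · exact hlift_lt s h
    · have hseq : s = tI := Subtype.ext h
      rw [hseq]
      have h1 : Tendsto (fun k => φ (Fl (u k))) atTop (nhds (φ (Fl tI))) :=
        ((hφat tI).tendsto.comp (Fl.continuous.tendsto tI)).comp huI
      have h2 : Tendsto (fun k => φ (Fl (u k))) atTop (nhds (γ tI)) := by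
        refine Tendsto.congr (fun k => (hlift_lt (u k) (hu1 k)).symm) ?_
        exact (hγ.tendsto tI).comp huI
      exact tendsto_nhds_unique h1 h2
  · intro s hs
    have hconst : ∀ k, f k s = f k tI := by
      intro k
      have hk1 : u k ≤ tI := Subtype.coe_le_coe.mp (hu1 k).le
      rw [(hf k).2.2.2.1 s (hk1.trans hs), (hf k).2.2.2.1 tI hk1]
    exact tendsto_nhds_unique ((hpt s).congr fun k => hconst k) (hpt tI)
  · exact tendsto_nhds_unique ((hpt 0).congr fun k => (hf k).2.2.2.2) tendsto_const_nhds

end Stmt9Aux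

open Stmt9Aux in
theorem stmt_9 (n : ℕ) {M : Type*} [MetricSpace M]
    (r C : ℝ) (hr : 0 < r) (hC : 0 < C)
    (φ : EuclideanSpace ℂ (Fin n) → M)
    (hloc : IsLocalHomeomorphOn φ (ball 0 r))
    -- φ does not shrink lengths by more than a factor C
    (hlen : ∀ c : unitInterval → EuclideanSpace ℂ (Fin n), Continuous c →
      (∀ s, c s ∈ ball (0 : EuclideanSpace ℂ (Fin n)) (r / 2)) →
      ENNReal.ofReal C⁻¹ * eVariationOn c Set.univ ≤
        eVariationOn (φ ∘ c) Set.univ)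
    (γ : unitInterval → M) (hγ : Continuous γ)
    (z : EuclideanSpace ℂ (Fin n)) (hz : z ∈ ball (0 : EuclideanSpace ℂ (Fin n)) (r / 8))
    (hstart : γ 0 = φ z)
    (hshort : eVariationOn γ Set.univ < ENNReal.ofReal (r / (4 * C))) :
    ∃! c : unitInterval → EuclideanSpace ℂ (Fin n),
      Continuous c ∧ (∀ s, c s ∈ ball (0 : EuclideanSpace ℂ (Fin n)) (r / 2)) ∧
      φ ∘ c = γ ∧ c 0 = z := by
  classical
  set A : Set ℝ := {x | ∃ hx : x ∈ Set.Icc (0 : ℝ) 1, ∃ c, IsPLift r φ γ z ⟨x, hx⟩ c} with hA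
  have h0A : (0 : ℝ) ∈ A := by
    refine ⟨⟨le_refl 0, zero_le_one⟩, fun _ => z, continuous_const, fun s => ?_, ?_,
      fun s _ => rfl, rfl⟩
    · exact ball_subset_ball (by linarith) hz
    · intro s hs
      have hs0 : s = (⟨0, ⟨le_refl 0, zero_le_one⟩⟩ : unitInterval) :=
        Subtype.ext (le_antisymm (Subtype.coe_le_coe.mpr hs) s.2.1)
      rw [hs0]
      exact hstart.symm
  have hbdd : BddAbove A := ⟨1, fun x hx => hx.1.2⟩
  set T := sSup A with hT
  have hTmem : T ∈ Set.Icc (0 : ℝ) 1 :=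
    ⟨le_csSup hbdd h0A, csSup_le ⟨0, h0A⟩ fun x hx => hx.1.2⟩
  set tI : unitInterval := ⟨T, hTmem⟩ with htI
  have hTlift : ∃ c, IsPLift r φ γ z tI c := by
    by_cases hTA : T ∈ A
    · obtain ⟨hx, c, hc⟩ := hTA
      exact ⟨c, hc⟩
    · have hseq : ∀ k : ℕ, ∃ x ∈ A, T - 1 / (k + 1) < x := by
        intro k
        apply exists_lt_of_lt_csSup ⟨0, h0A⟩
        have : (0 : ℝ) < 1 / (k + 1) := by positivity
        linarith
      choose x hxA hxlt using hseq
      have hxmem : ∀ k, x k ∈ Set.Icc (0 : ℝ) 1 := fun k => (hxA k).1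
      have hwit : ∀ k, ∃ c, IsPLift r φ γ z (⟨x k, hxmem k⟩ : unitInterval) c := by
        intro k
        obtain ⟨hx, c, hc⟩ := hxA k
        exact ⟨c, hc⟩
      choose f hf using hwit
      have hxleT : ∀ k, x k ≤ T := fun k => le_csSup hbdd (hxA k)
      have hu1 : ∀ k, ((⟨x k, hxmem k⟩ : unitInterval) : ℝ) < T := by
        intro k
        exact lt_of_le_of_ne (hxleT k) fun h => hTA (h ▸ hxA k)
      have hu2 : Tendsto (fun k => ((⟨x k, hxmem k⟩ : unitInterval) : ℝ)) atTop (nhds T) := by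
        apply tendsto_of_tendsto_of_tendsto_of_le_of_le (g := fun k : ℕ => T - 1 / (k + 1))
          (h := fun _ : ℕ => T)
        · have h1 : Tendsto (fun k : ℕ => 1 / ((k : ℝ) + 1)) atTop (nhds 0) :=
            tendsto_one_div_add_atTop_nhds_zero_nat
          have := (tendsto_const_nhds (x := T) (f := atTop (α := ℕ))).sub h1
          simpa using this
        · exact tendsto_const_nhds
        · exact fun k => (hxlt k).le
        · exact fun k => hxleT k
      exact limit_lift hr hC hloc hlen hγ hz hshort hTmem _ hu1 hu2 f hf
  obtain ⟨c₀, hc₀⟩ := hTlift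
  have hT1 : T = 1 := by
    by_contra hne
    have hTlt : T < 1 := lt_of_le_of_ne hTmem.2 hne
    obtain ⟨t', ht', c', hc'⟩ := hc₀.extend hr hloc hγ hTlt
    have ht'A : (t' : ℝ) ∈ A := ⟨t'.2, c', hc'⟩
    have := le_csSup hbdd ht'A
    rw [← hT] at this
    exact absurd this (not_le.mpr ht')
  have htI1 : tI = 1 := Subtype.ext hT1
  rw [htI1] at hc₀
  refine ⟨c₀, ⟨hc₀.1, hc₀.2.1, ?_, hc₀.2.2.2.2⟩, ?_⟩
  · funext s
    exact hc₀.2.2.1 s unitInterval.le_one'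
  · rintro c' ⟨h1, h2, h3, h4⟩
    have hc' : IsPLift r φ γ z 1 c' := by
      refine ⟨h1, h2, fun s _ => congrFun h3 s, fun s hs => ?_, h4⟩
      rw [le_antisymm unitInterval.le_one' hs]
    exact IsPLift.unique hr hloc hc' hc₀
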